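/- Let v be a nonzero vector in ℝ^N and ξ a nonzero vector in ℝ^N, and set μ = S(v)⁻¹ξ (which is nonzero). Then ‖S(v)⁻¹ξ‖ ≤ ‖ξ‖ / (S_m + α_T‖v‖ + ((α_L − α_T)/‖v‖)·(⟨v,μ⟩²/‖μ‖²)). In particular ‖S(v)⁻¹ξ‖ ≤ ‖ξ‖/S_m. -/

import Mathlib

open scoped InnerProductSpace

/-- With `μ = S(v)⁻¹ξ` (nonzero),
`‖S(v)⁻¹ξ‖ ≤ ‖ξ‖ / (S_m + α_T‖v‖ + ((α_L − α_T)/‖v‖)·(⟨v,μ⟩²/‖μ‖²))`,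
and in particular `‖S(v)⁻¹ξ‖ ≤ ‖ξ‖/S_m`. -/
theorem dispersion_inverse_norm_bound (N : ℕ) (hN : 1 ≤ N) (Sm αL αT : ℝ)
    (hSm : 0 < Sm) (hαT : 0 ≤ αT) (hα : αT < αL)
    (v : EuclideanSpace ℝ (Fin N)) (hv : v ≠ 0)
    (ξ : EuclideanSpace ℝ (Fin N)) (hξ : ξ ≠ 0)
    (T Sinv : EuclideanSpace ℝ (Fin N) →ₗ[ℝ] EuclideanSpace ℝ (Fin N))
    (hT : ∀ x, T x = (Sm + αT * ‖v‖) • x + (((αL - αT) / ‖v‖) * ⟪v, x⟫_ℝ) • v)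
    (hinv₁ : ∀ x, T (Sinv x) = x) (hinv₂ : ∀ x, Sinv (T x) = x)
    (μ : EuclideanSpace ℝ (Fin N)) (hμ : μ = Sinv ξ) :
    μ ≠ 0 ∧
    ‖Sinv ξ‖ ≤ ‖ξ‖ / (Sm + αT * ‖v‖ + ((αL - αT) / ‖v‖) * (⟪v, μ⟫_ℝ ^ 2 / ‖μ‖ ^ 2)) ∧
    ‖Sinv ξ‖ ≤ ‖ξ‖ / Sm := by
  have hvn : (0:ℝ) < ‖v‖ := norm_pos_iff.mpr hv
  have hTμ : T μ = ξ := by rw [hμ]; exact hinv₁ ξ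
  have hμ0 : μ ≠ 0 := by
    intro h
    apply hξ
    rw [← hTμ, h, map_zero]
  have hμn : (0:ℝ) < ‖μ‖ := norm_pos_iff.mpr hμ0
  set c := Sm + αT * ‖v‖ + ((αL - αT) / ‖v‖) * (⟪v, μ⟫_ℝ ^ 2 / ‖μ‖ ^ 2) with hc
  have hterm : 0 ≤ ((αL - αT) / ‖v‖) * (⟪v, μ⟫_ℝ ^ 2 / ‖μ‖ ^ 2) :=
    mul_nonneg (div_nonneg (by linarith) hvn.le)
      (div_nonneg (sq_nonneg _) (sq_nonneg _))
  have hSmc : Sm ≤ c := by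
    have := mul_nonneg hαT hvn.le
    rw [hc]; linarith
  have hcpos : 0 < c := lt_of_lt_of_le hSm hSmc
  have hkey : ⟪μ, ξ⟫_ℝ = c * ‖μ‖ ^ 2 := by
    have h1 : ⟪μ, ξ⟫_ℝ = (Sm + αT * ‖v‖) * ‖μ‖ ^ 2 + ((αL - αT) / ‖v‖) * ⟪v, μ⟫_ℝ ^ 2 := by
      rw [← hTμ, hT μ, inner_add_right, real_inner_smul_right, real_inner_smul_right,
        real_inner_self_eq_norm_sq, real_inner_comm μ v]
      ring
    rw [h1, hc]
    have hne : (‖μ‖ : ℝ) ^ 2 ≠ 0 := by positivity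
    generalize ⟪v, μ⟫_ℝ = t
    field_simp
  have hCS : ⟪μ, ξ⟫_ℝ ≤ ‖μ‖ * ‖ξ‖ := real_inner_le_norm μ ξ
  have hmain : c * ‖μ‖ ≤ ‖ξ‖ := by nlinarith
  have hnorm : ‖Sinv ξ‖ = ‖μ‖ := by rw [hμ]
  refine ⟨hμ0, ?_, ?_⟩
  · rw [hnorm, le_div_iff₀ hcpos]; linarith [hmain]
  · rw [hnorm, le_div_iff₀ hSm]
    nlinarith
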